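/- Let p ∈ S (the Shearer region for G), and let t_0 > 0 be such that (1+t)p ∈ S for all t ∈ [0, t_0]. Then for every node (S,u), the map t ↦ ϱ_{S,u}((1+t)p) is non-decreasing and convex on [0, t_0]; equivalently its derivative β_{S,u}(p,t) is non-negative and non-decreasing in t. -/

import Mathlib

open Finset

/-- alternating-sign independence polynomial over ℝ -/
def qbarR {V : Type*} [DecidableEq V] (G : SimpleGraph V) [DecidableRel G.Adj]
    (p : V → ℝ) (S : Finset V) : ℝ :=
  ∑ I ∈ S.powerset.filter (fun I => ∀ u ∈ I, ∀ v ∈ I, ¬ G.Adj u v),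
    (-1 : ℝ) ^ I.card * ∏ v ∈ I, p v

/-- real occupation ratio -/
noncomputable def occR {V : Type*} [DecidableEq V] (G : SimpleGraph V) [DecidableRel G.Adj]
    (p : V → ℝ) (S : Finset V) (u : V) : ℝ :=
  1 - qbarR G p S / qbarR G p (S.erase u)

set_option maxHeartbeats 1000000 in
/-- Fundamental deletion identity for the alternating independence polynomial. -/
lemma qbar_del {V : Type*} [DecidableEq V] (G : SimpleGraph V) [DecidableRel G.Adj]
    (p : V → ℝ) (S : Finset V) (u : V) (hu : u ∈ S) :
    qbarR G p S = qbarR G p (S.erase u)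
      - p u * qbarR G p ((S.erase u).filter (fun v => ¬ G.Adj u v)) := by
  have key : qbarR G p S
      = (∑ I ∈ (S.powerset.filter (fun I => ∀ u ∈ I, ∀ v ∈ I, ¬ G.Adj u v)).filter
          (fun I => u ∈ I), (-1 : ℝ) ^ I.card * ∏ v ∈ I, p v)
        + ∑ I ∈ (S.powerset.filter (fun I => ∀ u ∈ I, ∀ v ∈ I, ¬ G.Adj u v)).filter
          (fun I => u ∉ I), (-1 : ℝ) ^ I.card * ∏ v ∈ I, p v := by
    unfold qbarR
    exact (Finset.sum_filter_add_sum_filter_not _ (fun I => u ∈ I) _).symm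
  have h1 : ((S.powerset.filter (fun I => ∀ u ∈ I, ∀ v ∈ I, ¬ G.Adj u v)).filter
      (fun I => u ∉ I))
      = (S.erase u).powerset.filter (fun I => ∀ u ∈ I, ∀ v ∈ I, ¬ G.Adj u v) := by
    ext I
    simp only [mem_filter, mem_powerset, Finset.subset_erase]
    tauto
  have e1 : ∑ I ∈ (S.powerset.filter (fun I => ∀ u ∈ I, ∀ v ∈ I, ¬ G.Adj u v)).filter
        (fun I => u ∉ I), (-1 : ℝ) ^ I.card * ∏ v ∈ I, p v
      = qbarR G p (S.erase u) := by
    rw [h1]; rfl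
  have e2 : ∑ I ∈ (S.powerset.filter (fun I => ∀ u ∈ I, ∀ v ∈ I, ¬ G.Adj u v)).filter
        (fun I => u ∈ I), (-1 : ℝ) ^ I.card * ∏ v ∈ I, p v
      = - (p u * qbarR G p ((S.erase u).filter (fun v => ¬ G.Adj u v))) := by
    unfold qbarR
    rw [Finset.mul_sum, ← Finset.sum_neg_distrib]
    refine Finset.sum_nbij' (fun I => I.erase u) (fun J => insert u J) ?_ ?_ ?_ ?_ ?_
    · intro I hI
      simp only [mem_filter, mem_powerset] at hI ⊢
      obtain ⟨⟨hIS, hind⟩, huI⟩ := hI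
      refine ⟨?_, fun a ha b hb => hind a (Finset.mem_of_mem_erase ha) b
        (Finset.mem_of_mem_erase hb)⟩
      intro v hv
      simp only [mem_filter, Finset.mem_erase]
      have hv' := Finset.mem_of_mem_erase hv
      exact ⟨⟨(Finset.mem_erase.1 hv).1, hIS hv'⟩, hind u huI v hv'⟩
    · intro J hJ
      simp only [mem_filter, mem_powerset] at hJ ⊢
      obtain ⟨hJD, hind⟩ := hJ
      constructor
      · constructor
        · intro v hv
          rcases Finset.mem_insert.1 hv with rfl | hv
          · exact hu
          · have := hJD hv
            simp only [mem_filter, Finset.mem_erase] at this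
            exact this.1.2
        · intro a ha b hb
          rcases Finset.mem_insert.1 ha with hau | ha'
          · rcases Finset.mem_insert.1 hb with hbu | hb'
            · rw [hau, hbu]; exact G.loopless.irrefl _
            · rw [hau]
              have := hJD hb'
              simp only [mem_filter] at this
              exact this.2
          · rcases Finset.mem_insert.1 hb with hbu | hb'
            · rw [hbu]
              have := hJD ha'
              simp only [mem_filter] at this
              exact fun h => this.2 h.symm
            · exact hind a ha' b hb'
      · exact Finset.mem_insert_self u J
    · intro I hI
      simp only [mem_filter] at hI
      exact Finset.insert_erase hI.2
    · intro J hJ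
      simp only [mem_filter, mem_powerset] at hJ
      have huJ : u ∉ J := by
        intro h
        have := hJ.1 h
        simp only [mem_filter, Finset.mem_erase] at this
        exact this.1.1 rfl
      exact Finset.erase_insert huJ
    · intro I hI
      simp only [mem_filter] at hI
      have huI := hI.2
      have hcard : I.card = (I.erase u).card + 1 := by
        rw [Finset.card_erase_of_mem huI]
        have : 1 ≤ I.card := Finset.card_pos.2 ⟨u, huI⟩
        omega
      rw [← Finset.mul_prod_erase I p huI, hcard, pow_succ]
      ring
  rw [key, e1, e2]
  ring

/-- Occupation ratio formula via the deletion identity. -/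
lemma occR_formula {V : Type*} [DecidableEq V] (G : SimpleGraph V) [DecidableRel G.Adj]
    (p : V → ℝ) (S : Finset V) (u : V) (hu : u ∈ S)
    (hq : qbarR G p (S.erase u) ≠ 0) :
    occR G p S u = p u * qbarR G p ((S.erase u).filter (fun v => ¬ G.Adj u v))
      / qbarR G p (S.erase u) := by
  unfold occR
  rw [qbar_del G p S u hu]
  field_simp
  ring

lemma monotoneOn_congr {s : Set ℝ} {f g : ℝ → ℝ} (h : Set.EqOn f g s)
    (hf : MonotoneOn f s) : MonotoneOn g s := fun x hx y hy hxy => by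
  rw [← h hx, ← h hy]; exact hf hx hy hxy

lemma convexOn_congr {s : Set ℝ} {f g : ℝ → ℝ} (hs : Convex ℝ s) (h : Set.EqOn f g s)
    (hf : ConvexOn ℝ s f) : ConvexOn ℝ s g := by
  refine ⟨hs, fun x hx y hy a b ha hb hab => ?_⟩
  have hmem : a • x + b • y ∈ s := hs hx hy ha hb hab
  rw [← h hmem, ← h hx, ← h hy]
  exact hf.2 hx hy ha hb hab

lemma convexOn_affine (a b : ℝ) {s : Set ℝ} (hs : Convex ℝ s) :
    ConvexOn ℝ s (fun t => a * t + b) := by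
  refine ⟨hs, fun x _ y _ c d hc hd hcd => ?_⟩
  simp only [smul_eq_mul]
  apply le_of_eq
  linear_combination (-b) * hcd

/-- convexity/monotonicity of `t ↦ (1 - g t)⁻¹` for a convex monotone `g < 1`. -/
lemma inv_one_sub_convex {s : Set ℝ} (hs : Convex ℝ s) {g : ℝ → ℝ}
    (hmono : MonotoneOn g s) (hconv : ConvexOn ℝ s g) (hlt : ∀ t ∈ s, g t < 1) :
    MonotoneOn (fun t => (1 - g t)⁻¹) s ∧ ConvexOn ℝ s (fun t => (1 - g t)⁻¹) := by
  constructor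
  · intro x hx y hy hxy
    have h1 : 0 < 1 - g y := by linarith [hlt y hy]
    have h2 : 1 - g y ≤ 1 - g x := by linarith [hmono hx hy hxy]
    exact inv_anti₀ h1 h2
  · refine ⟨hs, fun x hx y hy a b ha hb hab => ?_⟩
    have hxpos : 0 < 1 - g x := by linarith [hlt x hx]
    have hypos : 0 < 1 - g y := by linarith [hlt y hy]
    have hmem : a • x + b • y ∈ s := hs hx hy ha hb hab
    have hcv := hconv.2 hx hy ha hb hab
    have hstep1 : a * (1 - g x) + b * (1 - g y) ≤ 1 - g (a • x + b • y) := by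
      simp only [smul_eq_mul] at hcv ⊢
      nlinarith
    have hpos' : 0 < a * (1 - g x) + b * (1 - g y) := by
      rcases ha.lt_or_eq with ha' | ha'
      · nlinarith
      · have hb' : b = 1 := by linarith
        rw [← ha', hb']; nlinarith
    have hstep2 : (1 - g (a • x + b • y))⁻¹ ≤ (a * (1 - g x) + b * (1 - g y))⁻¹ := by
      apply inv_anti₀ hpos' hstep1
    have hstep3 : (a * (1 - g x) + b * (1 - g y))⁻¹
        ≤ a * (1 - g x)⁻¹ + b * (1 - g y)⁻¹ := by
      have := (convexOn_zpow (-1 : ℤ)).2 (Set.mem_Ioi.2 hxpos) (Set.mem_Ioi.2 hypos)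
        ha hb hab
      simp only [smul_eq_mul, zpow_neg, zpow_one] at this
      exact this
    calc (1 - g (a • x + b • y))⁻¹ ≤ (a * (1 - g x) + b * (1 - g y))⁻¹ := hstep2
      _ ≤ a * (1 - g x)⁻¹ + b * (1 - g y)⁻¹ := hstep3
      _ = a • (1 - g x)⁻¹ + b • (1 - g y)⁻¹ := by simp [smul_eq_mul]

/-- if `p ∈ S` and `(1+t)p ∈ S` for all `t ∈ [0, t₀]`, then for every node
`(S,u)` the map `t ↦ ϱ_{S,u}((1+t)p)` is non-decreasing and convex on `[0, t₀]`
(equivalently, its derivative `β_{S,u}(p,t)` is non-negative and non-decreasing). -/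
theorem stmt10 {V : Type*} [Fintype V] [DecidableEq V] (G : SimpleGraph V)
    [DecidableRel G.Adj] (p : V → ℂ) (t0 : ℝ) (ht0 : 0 < t0)
    (hShearer : ∀ t ∈ Set.Icc (0 : ℝ) t0,
      ∀ S : Finset V, 0 < qbarR G (fun v => (1 + t) * ‖p v‖) S)
    (S : Finset V) (u : V) (hu : u ∈ S) :
    MonotoneOn (fun t : ℝ => occR G (fun v => (1 + t) * ‖p v‖) S u)
        (Set.Icc 0 t0) ∧
    ConvexOn ℝ (Set.Icc (0 : ℝ) t0)
        (fun t : ℝ => occR G (fun v => (1 + t) * ‖p v‖) S u) := by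
  classical
  set I : Set ℝ := Set.Icc (0 : ℝ) t0 with hI
  set pe : ℝ → V → ℝ := fun t v => (1 + t) * ‖p v‖ with hpe
  have hIconv : Convex ℝ I := convex_Icc 0 t0
  have qpos : ∀ t ∈ I, ∀ T : Finset V, 0 < qbarR G (pe t) T := hShearer
  have pe_nonneg : ∀ t ∈ I, ∀ v, 0 ≤ pe t v := by
    intro t ht v
    have : (0 : ℝ) ≤ 1 + t := by have := ht.1; linarith
    exact mul_nonneg this (norm_nonneg _)
  -- occupation ratio bounds
  have occ_lt : ∀ t ∈ I, ∀ T : Finset V, ∀ v, occR G (pe t) T v < 1 := by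
    intro t ht T v
    unfold occR
    have := div_pos (qpos t ht T) (qpos t ht (T.erase v))
    linarith
  have occ_nonneg : ∀ t ∈ I, ∀ T : Finset V, ∀ v ∈ T, 0 ≤ occR G (pe t) T v := by
    intro t ht T v hv
    unfold occR
    rw [qbar_del G (pe t) T v hv]
    have h1 := qpos t ht (T.erase v)
    have h2 := qpos t ht ((T.erase v).filter (fun w => ¬ G.Adj v w))
    have h3 := pe_nonneg t ht v
    rw [sub_nonneg, div_le_one h1]
    nlinarith
  -- main claim by strong induction on card
  have main : ∀ n : ℕ, ∀ T : Finset V, T.card ≤ n → ∀ v ∈ T,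
      MonotoneOn (fun t => occR G (pe t) T v) I ∧
      ConvexOn ℝ I (fun t => occR G (pe t) T v) := by
    intro n
    induction n with
    | zero =>
      intro T hT v hv
      exact absurd (Finset.card_pos.2 ⟨v, hv⟩) (by omega)
    | succ n IH =>
      intro T hT v hv
      by_cases hnb : ∃ w ∈ T.erase v, G.Adj v w
      · -- recursive case: remove a neighbour w
        obtain ⟨w, hwT, hadj⟩ := hnb
        have hwv : w ≠ v := (Finset.mem_erase.1 hwT).1
        have hwS : w ∈ T := Finset.mem_of_mem_erase hwT
        have hvT' : v ∈ T.erase w := Finset.mem_erase.2 ⟨fun h => hwv h.symm, hv⟩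
        have hcard : T.card = n + 1 ∨ T.card ≤ n := by omega
        have hcard' : (T.erase w).card ≤ n := by
          rw [Finset.card_erase_of_mem hwS]
          have : 1 ≤ T.card := Finset.card_pos.2 ⟨v, hv⟩
          omega
        have hcard'' : (T.erase v).card ≤ n := by
          rw [Finset.card_erase_of_mem hv]
          have : 1 ≤ T.card := Finset.card_pos.2 ⟨v, hv⟩
          omega
        obtain ⟨mono1, conv1⟩ := IH (T.erase w) hcard' v hvT'
        obtain ⟨mono2, conv2⟩ := IH (T.erase v) hcard'' w hwT
        -- the inverse factor
        have hlt2 : ∀ t ∈ I, occR G (pe t) (T.erase v) w < 1 :=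
          fun t ht => occ_lt t ht _ _
        obtain ⟨monoh, convh⟩ := inv_one_sub_convex hIconv mono2 conv2 hlt2
        have hnonneg1 : ∀ t ∈ I, 0 ≤ occR G (pe t) (T.erase w) v :=
          fun t ht => occ_nonneg t ht _ v hvT'
        have hnonnegh : ∀ t ∈ I, 0 ≤ (1 - occR G (pe t) (T.erase v) w)⁻¹ := by
          intro t ht
          have h := hlt2 t ht
          have : (0:ℝ) < 1 - occR G (pe t) (T.erase v) w := by linarith
          positivity
        -- key identity
        have hkey : Set.EqOn
            (fun t => occR G (pe t) (T.erase w) v *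
              (1 - occR G (pe t) (T.erase v) w)⁻¹)
            (fun t => occR G (pe t) T v) I := by
          intro t ht
          simp only
          have hq1 : qbarR G (pe t) (T.erase v) ≠ 0 := (qpos t ht _).ne'
          have hq2 : qbarR G (pe t) ((T.erase w).erase v) ≠ 0 := (qpos t ht _).ne'
          have hq3 : qbarR G (pe t) ((T.erase v).erase w) ≠ 0 := (qpos t ht _).ne'
          rw [occR_formula G (pe t) T v hv hq1,
            occR_formula G (pe t) (T.erase w) v hvT' hq2]
          have hDeq : ((T.erase w).erase v).filter (fun x => ¬ G.Adj v x)
              = (T.erase v).filter (fun x => ¬ G.Adj v x) := by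
            ext x
            simp only [mem_filter, Finset.mem_erase]
            constructor
            · rintro ⟨⟨hxv, _, hxT⟩, hnadj⟩
              exact ⟨⟨hxv, hxT⟩, hnadj⟩
            · rintro ⟨⟨hxv, hxT⟩, hnadj⟩
              refine ⟨⟨hxv, fun h => ?_, hxT⟩, hnadj⟩
              subst h; exact hnadj hadj
          have hocc : 1 - occR G (pe t) (T.erase v) w
              = qbarR G (pe t) (T.erase v) / qbarR G (pe t) ((T.erase v).erase w) := by
            unfold occR; ring
          rw [hDeq, hocc]
          have hcomm : (T.erase w).erase v = (T.erase v).erase w := Finset.erase_right_comm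
          rw [hcomm]
          have h1 := qpos t ht (T.erase v)
          have h3 := qpos t ht ((T.erase v).erase w)
          field_simp
        constructor
        · refine monotoneOn_congr hkey ?_
          intro x hx y hy hxy
          exact mul_le_mul (mono1 hx hy hxy) (monoh hx hy hxy) (hnonnegh x hx)
            (hnonneg1 y hy)
        · refine convexOn_congr hIconv hkey ?_
          exact ConvexOn.mul conv1 convh (fun x hx => hnonneg1 x hx)
            (fun x hx => hnonnegh x hx) (mono1.monovaryOn monoh)
      · -- base case: no neighbour of v in T
        push_neg at hnb
        have hD : (T.erase v).filter (fun x => ¬ G.Adj v x) = T.erase v := by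
          apply Finset.filter_true_of_mem
          intro x hx
          exact hnb x hx
        have hEq : Set.EqOn (fun t => ‖p v‖ * t + ‖p v‖)
            (fun t => occR G (pe t) T v) I := by
          intro t ht
          simp only
          have hq : qbarR G (pe t) (T.erase v) ≠ 0 := (qpos t ht _).ne'
          rw [occR_formula G (pe t) T v hv hq, hD, mul_div_assoc, div_self hq, mul_one]
          simp only [hpe]
          ring
        constructor
        · refine monotoneOn_congr hEq ?_
          intro x _ y _ hxy
          simp only
          have := norm_nonneg (p v)
          nlinarith
        · exact convexOn_congr hIconv hEq (convexOn_affine _ _ hIconv)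
  exact main S.card S le_rfl u hu
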